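/- Let A be an invertible n×n real matrix, b ∈ ℝⁿ, x = A⁻¹b, and let ‖·‖ denote the Euclidean norm on ℝⁿ and also the induced operator 2-norm on matrices. Let 0 ≤ θ < 1 and μ ≥ 0. Suppose a sequence (x_i) satisfies x_{i+1} = x_i + d_i for every i ≥ 0, where for each i there exists a computed residual r_i with ‖r_i − (b − A x_i)‖ ≤ μ and the correction satisfies ‖d_i − A⁻¹ r_i‖ ≤ θ ‖A⁻¹ r_i‖. Then for every i ≥ 0: (a) ‖x_{i+1} − x‖ ≤ θ ‖x_i − x‖ + (1 + θ) ‖A⁻¹‖ μ; and consequently (b) ‖x_i − x‖ ≤ θ^i ‖x_0 − x‖ + ((1 − θ^i)/(1 − θ)) (1 + θ) ‖A⁻¹‖ μ, so that limsup_{i→∞} ‖x_i − x‖ ≤ (1 + θ)/(1 − θ) · ‖A⁻¹‖ μ. -/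

import Mathlib

open Filter

/-- **Limiting accuracy of mixed precision iterative refinement.**

Let `A` be an invertible `n × n` real matrix, `b ∈ ℝⁿ`, `x = A⁻¹ b`, with the Euclidean
norm on vectors and the induced operator 2-norm on matrices (realized via
`Matrix.toEuclideanCLM`).  Suppose `x_{i+1} = x_i + d_i` where the computed residual
satisfies `‖r_i − (b − A x_i)‖ ≤ μ` and the correction satisfies
`‖d_i − A⁻¹ r_i‖ ≤ θ ‖A⁻¹ r_i‖` with `0 ≤ θ < 1` and `μ ≥ 0`.  Then
(a) `‖x_{i+1} − x‖ ≤ θ ‖x_i − x‖ + (1 + θ) ‖A⁻¹‖ μ`,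
(b) `‖x_i − x‖ ≤ θ^i ‖x_0 − x‖ + ((1 − θ^i)/(1 − θ)) (1 + θ) ‖A⁻¹‖ μ`, and
(c) `limsup_i ‖x_i − x‖ ≤ ((1 + θ)/(1 − θ)) ‖A⁻¹‖ μ`. -/
theorem iterative_refinement_limiting_accuracy
    {n : ℕ} (A : Matrix (Fin n) (Fin n) ℝ) (hA : IsUnit A)
    (b x : EuclideanSpace ℝ (Fin n))
    (hx : x = Matrix.toEuclideanCLM (𝕜 := ℝ) A⁻¹ b)
    (θ μ : ℝ) (hθ0 : 0 ≤ θ) (hθ1 : θ < 1) (hμ : 0 ≤ μ)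
    (xseq d r : ℕ → EuclideanSpace ℝ (Fin n))
    (hstep : ∀ i, xseq (i + 1) = xseq i + d i)
    (hr : ∀ i, ‖r i - (b - Matrix.toEuclideanCLM (𝕜 := ℝ) A (xseq i))‖ ≤ μ)
    (hd : ∀ i, ‖d i - Matrix.toEuclideanCLM (𝕜 := ℝ) A⁻¹ (r i)‖ ≤
        θ * ‖Matrix.toEuclideanCLM (𝕜 := ℝ) A⁻¹ (r i)‖) :
    (∀ i, ‖xseq (i + 1) - x‖ ≤
        θ * ‖xseq i - x‖ + (1 + θ) * ‖Matrix.toEuclideanCLM (𝕜 := ℝ) A⁻¹‖ * μ) ∧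
    (∀ i, ‖xseq i - x‖ ≤ θ ^ i * ‖xseq 0 - x‖ +
        ((1 - θ ^ i) / (1 - θ)) * (1 + θ) * ‖Matrix.toEuclideanCLM (𝕜 := ℝ) A⁻¹‖ * μ) ∧
    limsup (fun i => ‖xseq i - x‖) atTop ≤
        ((1 + θ) / (1 - θ)) * ‖Matrix.toEuclideanCLM (𝕜 := ℝ) A⁻¹‖ * μ := by

  have hdet : IsUnit A.det := (Matrix.isUnit_iff_isUnit_det A).mp hA
  set B := Matrix.toEuclideanCLM (𝕜 := ℝ) A with hB
  set Bi := Matrix.toEuclideanCLM (𝕜 := ℝ) A⁻¹ with hBi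
  have hBnorm : (0:ℝ) ≤ ‖Bi‖ := norm_nonneg _
  have hBiB : ∀ v, Bi (B v) = v := by
    intro v
    have h1 : A⁻¹ * A = 1 := Matrix.nonsing_inv_mul A hdet
    have h2 : Bi * B = 1 := by rw [hB, hBi, ← map_mul, h1, map_one]
    calc Bi (B v) = (Bi * B) v := rfl
      _ = v := by rw [h2]; rfl
  have key : ∀ i, xseq (i + 1) - x
      = (d i - Bi (r i)) + Bi (r i - (b - B (xseq i))) := by
    intro i
    have h1 : Bi (r i - (b - B (xseq i))) = Bi (r i) - (x - xseq i) := by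
      rw [map_sub, map_sub, hBiB, ← hx]
    rw [hstep, h1]
    abel
  have hres : ∀ i, ‖Bi (r i - (b - B (xseq i)))‖ ≤ ‖Bi‖ * μ := fun i =>
    (Bi.le_opNorm _).trans (mul_le_mul_of_nonneg_left (hr i) hBnorm)
  have keybound : ∀ i, ‖Bi (r i)‖ ≤ ‖xseq i - x‖ + ‖Bi‖ * μ := by
    intro i
    have h1 : Bi (r i) = (x - xseq i) + Bi (r i - (b - B (xseq i))) := by
      have h2 : Bi (r i - (b - B (xseq i))) = Bi (r i) - (x - xseq i) := by
        rw [map_sub, map_sub, hBiB, ← hx]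
      rw [h2]; abel
    rw [h1]
    calc ‖(x - xseq i) + Bi (r i - (b - B (xseq i)))‖
        ≤ ‖x - xseq i‖ + ‖Bi (r i - (b - B (xseq i)))‖ := norm_add_le _ _
      _ ≤ ‖xseq i - x‖ + ‖Bi‖ * μ := by
          rw [norm_sub_rev]; exact add_le_add_right (hres i) _
  have parta : ∀ i, ‖xseq (i + 1) - x‖ ≤
      θ * ‖xseq i - x‖ + (1 + θ) * ‖Bi‖ * μ := by
    intro i
    calc ‖xseq (i + 1) - x‖
        ≤ ‖d i - Bi (r i)‖ + ‖Bi (r i - (b - B (xseq i)))‖ := by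
          rw [key i]; exact norm_add_le _ _
      _ ≤ θ * ‖Bi (r i)‖ + ‖Bi‖ * μ := add_le_add (hd i) (hres i)
      _ ≤ θ * (‖xseq i - x‖ + ‖Bi‖ * μ) + ‖Bi‖ * μ :=
          add_le_add_left (mul_le_mul_of_nonneg_left (keybound i) hθ0) _
      _ = θ * ‖xseq i - x‖ + (1 + θ) * ‖Bi‖ * μ := by ring
  have h1θ : (0:ℝ) < 1 - θ := by linarith
  have partb : ∀ i, ‖xseq i - x‖ ≤ θ ^ i * ‖xseq 0 - x‖ +
      ((1 - θ ^ i) / (1 - θ)) * (1 + θ) * ‖Bi‖ * μ := by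
    intro i
    induction i with
    | zero =>
        simp only [pow_zero, one_mul, sub_self, zero_div, zero_mul, add_zero]
        exact le_refl _
    | succ i ih =>
      have h2 := parta i
      have h3 := mul_le_mul_of_nonneg_left ih hθ0
      have heq : θ * (θ ^ i * ‖xseq 0 - x‖ +
          ((1 - θ ^ i) / (1 - θ)) * (1 + θ) * ‖Bi‖ * μ) + (1 + θ) * ‖Bi‖ * μ
          = θ ^ (i + 1) * ‖xseq 0 - x‖ +
            ((1 - θ ^ (i + 1)) / (1 - θ)) * (1 + θ) * ‖Bi‖ * μ := by
        have hne : (1 - θ) ≠ 0 := ne_of_gt h1θ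
        generalize ‖xseq 0 - x‖ = a
        generalize ‖Bi‖ = c
        field_simp
        ring
      linarith
  refine ⟨parta, partb, ?_⟩
  set L : ℝ := ((1 + θ) / (1 - θ)) * ‖Bi‖ * μ with hL
  have hLnn : 0 ≤ L := by
    have h4 : (0:ℝ) ≤ (1 + θ) / (1 - θ) := div_nonneg (by linarith) (le_of_lt h1θ)
    exact mul_nonneg (mul_nonneg h4 hBnorm) hμ
  have hg : Tendsto (fun i => θ ^ i * ‖xseq 0 - x‖ + L) atTop (nhds L) := by
    have h1 := (tendsto_pow_atTop_nhds_zero_of_lt_one hθ0 hθ1).mul_const ‖xseq 0 - x‖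
    have h2 := h1.add_const L
    simpa using h2
  have hfg : ∀ i, ‖xseq i - x‖ ≤ θ ^ i * ‖xseq 0 - x‖ + L := by
    intro i
    refine (partb i).trans (add_le_add_right ?_ _)
    have hpow : (1 - θ ^ i) / (1 - θ) ≤ 1 / (1 - θ) := by
      gcongr
      have := pow_nonneg hθ0 i; linarith
    calc ((1 - θ ^ i) / (1 - θ)) * (1 + θ) * ‖Bi‖ * μ
        ≤ (1 / (1 - θ)) * (1 + θ) * ‖Bi‖ * μ := by
          have h4 : (0:ℝ) ≤ 1 + θ := by linarith
          have := mul_le_mul_of_nonneg_right (mul_le_mul_of_nonneg_right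
            (mul_le_mul_of_nonneg_right hpow h4) hBnorm) hμ
          exact this
      _ = L := by rw [hL]; ring
  have hcle : limsup (fun i => ‖xseq i - x‖) atTop
      ≤ limsup (fun i => θ ^ i * ‖xseq 0 - x‖ + L) atTop := by
    exact limsup_le_limsup (Eventually.of_forall hfg)
      (Filter.isCoboundedUnder_le_of_le atTop fun i => norm_nonneg _)
      hg.isBoundedUnder_le
  exact hcle.trans_eq hg.limsup_eq
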